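/- Let (S_j)_{j=0}^{N-1} be a representation of the Cuntz algebra 𝒪_N on H, let f ∈ H with ‖f‖ = 1 satisfy S_j^* f = λ_j f for all j = 0, …, N−1 with λ_j ∈ ℂ, and let μ be a spectral measure of f on [0,1). Then μ = ∑_{j=0}^{N−1} |λ_j|² · (μ ∘ σ_j^{−1}), where μ ∘ σ_j^{−1} denotes the pushforward of μ under σ_j, i.e. (μ ∘ σ_j^{−1})(E) = μ({x : σ_j(x) ∈ E}) for Borel sets E ⊆ [0,1). -/

import Mathlib

open MeasureTheory ContinuousLinearMap
open scoped InnerProductSpace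

variable {H : Type*} [NormedAddCommGroup H] [InnerProductSpace ℂ H] [CompleteSpace H]

/-- The word operator `S_α = S_{α 1} ⋯ S_{α k}` associated to a multi-index
`α ∈ {0,…,N-1}^k`. -/
noncomputable def Sw {N : ℕ} (S : Fin N → H →L[ℂ] H) {k : ℕ} (α : Fin k → Fin N) :
    H →L[ℂ] H :=
  (List.ofFn fun i => S (α i)).prod

/-- A family `S_0, …, S_{N-1}` of bounded operators is a representation of the Cuntz
algebra `𝒪_N` if `S_j^* S_k = δ_{jk} I` and `∑ j, S_j S_j^* = I`. -/
def CuntzRep {N : ℕ} (S : Fin N → H →L[ℂ] H) : Prop :=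
  (∀ j k : Fin N, adjoint (S j) ∘L S k = if j = k then 1 else 0) ∧
    ∑ j : Fin N, S j ∘L adjoint (S j) = 1

/-- `x_k(α) = α_1/N + α_2/N² + ⋯ + α_k/N^k`. -/
noncomputable def xk (N : ℕ) {k : ℕ} (α : Fin k → Fin N) : ℝ :=
  ∑ i : Fin k, (α i : ℝ) / (N : ℝ) ^ ((i : ℕ) + 1)

/-- The `N`-adic interval `I_k(α) = [x_k(α), x_k(α) + N^{-k})`. -/
noncomputable def Ik (N : ℕ) {k : ℕ} (α : Fin k → Fin N) : Set ℝ :=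
  Set.Ico (xk N α) (xk N α + ((N : ℝ) ^ k)⁻¹)

/-- A Borel measure `μ` on `[0,1)` is a spectral measure of `g` if `μ([0,1)) = ‖g‖²`
and `μ(I_k(α)) = ‖S_α^* g‖²` for every `k ≥ 1` and multi-index `α`. -/
def IsSpectralMeasureR {N : ℕ} (S : Fin N → H →L[ℂ] H) (g : H) (μ : Measure ℝ) : Prop :=
  μ (Set.Ico (0:ℝ) 1)ᶜ = 0 ∧ μ Set.univ = ENNReal.ofReal (‖g‖ ^ 2) ∧
    ∀ k : ℕ, 1 ≤ k → ∀ α : Fin k → Fin N,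
      μ (Ik N α) = ENNReal.ofReal (‖adjoint (Sw S α) g‖ ^ 2)

/-! ### Auxiliary lemmas on `xk` and `N`-adic intervals -/

lemma xk_zero (N : ℕ) (α : Fin 0 → Fin N) : xk N α = 0 := by simp [xk]

lemma xk_succ {N k : ℕ} (hN : 0 < N) (α : Fin (k+1) → Fin N) :
    xk N α = (α 0 : ℝ) / N + xk N (Fin.tail α) / N := by
  have hNR : (N:ℝ) ≠ 0 := by positivity
  rw [xk, Fin.sum_univ_succ]
  congr 1
  · simp
  · rw [xk, Finset.sum_div]
    apply Finset.sum_congr rfl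
    intro i _
    simp [Fin.tail, pow_succ]
    ring

lemma xk_nonneg (N : ℕ) {k : ℕ} (α : Fin k → Fin N) : 0 ≤ xk N α := by
  apply Finset.sum_nonneg; intro i _; positivity

lemma xk_add_le {N : ℕ} (hN : 0 < N) : ∀ {k : ℕ} (α : Fin k → Fin N),
    xk N α + ((N : ℝ) ^ k)⁻¹ ≤ 1 := by
  have hNR : (0:ℝ) < N := by exact_mod_cast hN
  intro k
  induction k with
  | zero => intro α; simp [xk_zero]
  | succ m ih =>
    intro α
    rw [xk_succ hN α]
    have h1 : (α 0 : ℝ) ≤ (N:ℝ) - 1 := by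
      have h2 : (α 0 : ℕ) + 1 ≤ N := (α 0).isLt
      have := (Nat.cast_le (α := ℝ)).mpr h2; push_cast at this; linarith
    have h2 := ih (Fin.tail α)
    have hpow : ((N:ℝ) ^ (m+1))⁻¹ = ((N:ℝ)^m)⁻¹ / N := by
      rw [pow_succ]; field_simp
    rw [hpow]
    have : (α 0 : ℝ) / N + xk N (Fin.tail α) / N + ((N:ℝ)^m)⁻¹ / N
        = ((α 0 : ℝ) + (xk N (Fin.tail α) + ((N:ℝ)^m)⁻¹)) / N := by ring
    rw [this]
    rw [div_le_one hNR]
    linarith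

lemma exists_repr {N : ℕ} (hN : 0 < N) : ∀ {k : ℕ} (α : Fin k → Fin N),
    ∃ p : ℕ, p < N ^ k ∧ xk N α = p / (N:ℝ) ^ k := by
  have hNR : (0:ℝ) < N := by exact_mod_cast hN
  intro k
  induction k with
  | zero => intro α; exact ⟨0, by norm_num, by simp [xk_zero]⟩
  | succ m ih =>
    intro α
    obtain ⟨p, hp, hx⟩ := ih (Fin.tail α)
    refine ⟨(α 0) * N ^ m + p, ?_, ?_⟩
    · calc (α 0 : ℕ) * N ^ m + p < (α 0 : ℕ) * N ^ m + N ^ m := by omega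
        _ = ((α 0 : ℕ) + 1) * N ^ m := by ring
        _ ≤ N * N ^ m := Nat.mul_le_mul_right _ (α 0).isLt
        _ = N ^ (m+1) := by ring
    · rw [xk_succ hN α, hx]
      have hNR' : (N:ℝ) ≠ 0 := ne_of_gt hNR
      have hNm : ((N:ℝ))^m ≠ 0 := by positivity
      push_cast
      field_simp
      ring

lemma exists_digits {N : ℕ} (hN : 0 < N) : ∀ (k p : ℕ), p < N ^ k →
    ∃ α : Fin k → Fin N, xk N α = p / (N:ℝ) ^ k := by
  have hNR : (0:ℝ) < N := by exact_mod_cast hN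
  intro k
  induction k with
  | zero => intro p hp
            rw [pow_zero] at hp
            have : p = 0 := by omega
            subst this
            exact ⟨Fin.elim0, by simp [xk_zero]⟩
  | succ m ih =>
    intro p hp
    have ha : p / N ^ m < N := by
      rw [Nat.div_lt_iff_lt_mul (pow_pos hN m)]
      calc p < N ^ (m+1) := hp
        _ = N * N ^ m := by ring
    have hr : p % N ^ m < N ^ m := Nat.mod_lt _ (pow_pos hN m)
    obtain ⟨β, hβ⟩ := ih (p % N ^ m) hr
    refine ⟨Fin.cons ⟨p / N ^ m, ha⟩ β, ?_⟩
    rw [xk_succ hN, Fin.tail_cons, hβ]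
    have hdm : p = N ^ m * (p / N ^ m) + p % N ^ m := (Nat.div_add_mod p (N^m)).symm
    have hdmR : (p:ℝ) = (N:ℝ) ^ m * ((p / N ^ m : ℕ):ℝ) + ((p % N ^ m : ℕ):ℝ) := by
      exact_mod_cast congrArg (Nat.cast (R := ℝ)) hdm
    simp only [Fin.cons_zero]
    have hNm : ((N:ℝ))^m ≠ 0 := by positivity
    have hNR' : (N:ℝ) ≠ 0 := ne_of_gt hNR
    rw [hdmR]
    field_simp
    ring

/-! ### The generating π-system -/

/-- The π-system consisting of left rays `(-∞,a)` with `a ≤ 0`, right rays `[a,∞)`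
with `a ≥ 1`, and `N`-adic intervals `[p/N^k, (p+1)/N^k)` with `p < N^k`. -/
def nadicC (N : ℕ) : Set (Set ℝ) :=
  {s | (∃ a : ℝ, a ≤ 0 ∧ s = Set.Iio a) ∨ (∃ a : ℝ, 1 ≤ a ∧ s = Set.Ici a) ∨
    (∃ k p : ℕ, p < N ^ k ∧ s = Set.Ico ((p:ℝ) / (N:ℝ)^k) (((p:ℝ)+1) / (N:ℝ)^k))}

lemma inter_sub {N : ℕ} (hN : 0 < N) {k l p q : ℕ} (hp : p < N ^ k) (hq : q < N ^ l)
    (hkl : k ≤ l)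
    (hne : (Set.Ico ((p:ℝ)/(N:ℝ)^k) (((p:ℝ)+1)/(N:ℝ)^k) ∩
      Set.Ico ((q:ℝ)/(N:ℝ)^l) (((q:ℝ)+1)/(N:ℝ)^l)).Nonempty) :
    Set.Ico ((q:ℝ)/(N:ℝ)^l) (((q:ℝ)+1)/(N:ℝ)^l) ⊆
      Set.Ico ((p:ℝ)/(N:ℝ)^k) (((p:ℝ)+1)/(N:ℝ)^k) := by
  have hNR : (0:ℝ) < N := by exact_mod_cast hN
  have hNk : (0:ℝ) < (N:ℝ)^k := by positivity
  have hNl : (0:ℝ) < (N:ℝ)^l := by positivity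
  obtain ⟨x, ⟨h1, h2⟩, h3, h4⟩ := hne
  have hM : (N:ℝ)^l = (N:ℝ)^k * (N:ℝ)^(l-k) := by
    rw [← pow_add]; congr 1; omega
  have e1 : (p:ℝ)/(N:ℝ)^k < ((q:ℝ)+1)/(N:ℝ)^l := lt_of_le_of_lt h1 h4
  have e2 : (q:ℝ)/(N:ℝ)^l < ((p:ℝ)+1)/(N:ℝ)^k := lt_of_le_of_lt h3 h2
  have n1 : p * N^(l-k) ≤ q := by
    have : (p:ℝ) * (N:ℝ)^(l-k) < (q:ℝ) + 1 := by
      rw [div_lt_div_iff₀ hNk hNl] at e1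
      calc (p:ℝ) * (N:ℝ)^(l-k) = (p:ℝ) * (N:ℝ)^l / (N:ℝ)^k := by
            rw [hM]; field_simp
        _ < ((q:ℝ)+1) := by
            rw [div_lt_iff₀ hNk]; linarith [e1]
    have : ((p * N^(l-k) : ℕ):ℝ) < ((q+1 : ℕ):ℝ) := by push_cast; linarith
    have := Nat.cast_lt.mp this
    omega
  have n2 : q + 1 ≤ (p+1) * N^(l-k) := by
    have : (q:ℝ) < ((p:ℝ)+1) * (N:ℝ)^(l-k) := by
      rw [div_lt_div_iff₀ hNl hNk] at e2
      have : (q:ℝ) * (N:ℝ)^k < ((p:ℝ)+1) * ((N:ℝ)^k * (N:ℝ)^(l-k)) := by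
        rw [← hM]; linarith
      nlinarith
    have : ((q:ℕ):ℝ) < (((p+1) * N^(l-k) : ℕ):ℝ) := by push_cast; linarith
    have := Nat.cast_lt.mp this
    omega
  have r1 : (p:ℝ) * (N:ℝ)^(l-k) ≤ (q:ℝ) := by exact_mod_cast n1
  have r2 : (q:ℝ) + 1 ≤ ((p:ℝ)+1) * (N:ℝ)^(l-k) := by exact_mod_cast n2
  intro y hy
  obtain ⟨hy1, hy2⟩ := hy
  constructor
  · have h : (p:ℝ)/(N:ℝ)^k ≤ (q:ℝ)/(N:ℝ)^l := by
      rw [div_le_div_iff₀ hNk hNl, hM]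
      nlinarith [mul_le_mul_of_nonneg_right r1 (le_of_lt hNk)]
    linarith
  · have h : ((q:ℝ)+1)/(N:ℝ)^l ≤ ((p:ℝ)+1)/(N:ℝ)^k := by
      rw [div_le_div_iff₀ hNl hNk, hM]
      nlinarith [mul_le_mul_of_nonneg_right r2 (le_of_lt hNk)]
    linarith

lemma nadicC_pi {N : ℕ} (hN : 0 < N) : IsPiSystem (nadicC N) := by
  have hNR : (0:ℝ) < N := by exact_mod_cast hN
  rintro s hs t ht hne
  rcases hs with ⟨a, ha, rfl⟩ | ⟨a, ha, rfl⟩ | ⟨k, p, hp, rfl⟩ <;>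
    rcases ht with ⟨b, hb, rfl⟩ | ⟨b, hb, rfl⟩ | ⟨l, q, hq, rfl⟩
  · rw [Set.Iio_inter_Iio]
    exact Or.inl ⟨min a b, le_trans (min_le_left a b) ha, rfl⟩
  · obtain ⟨x, hx1, hx2⟩ := hne
    simp only [Set.mem_Iio, Set.mem_Ici] at hx1 hx2
    linarith
  · obtain ⟨x, hx1, hx2⟩ := hne
    simp only [Set.mem_Iio, Set.mem_Ico] at hx1 hx2
    have : (0:ℝ) ≤ (q:ℝ)/(N:ℝ)^l := by positivity
    linarith [hx2.1]
  · obtain ⟨x, hx1, hx2⟩ := hne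
    simp only [Set.mem_Iio, Set.mem_Ici] at hx1 hx2
    linarith
  · rw [Set.Ici_inter_Ici]
    exact Or.inr (Or.inl ⟨max a b, le_max_of_le_left ha, rfl⟩)
  · obtain ⟨x, hx1, hx2⟩ := hne
    simp only [Set.mem_Ici, Set.mem_Ico] at hx1 hx2
    have hub : ((q:ℝ)+1)/(N:ℝ)^l ≤ 1 := by
      rw [div_le_one (by positivity)]
      have : ((q+1:ℕ):ℝ) ≤ ((N^l:ℕ):ℝ) := Nat.cast_le.mpr hq
      push_cast at this; linarith
    linarith [hx2.2]
  · obtain ⟨x, hx1, hx2⟩ := hne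
    simp only [Set.mem_Iio, Set.mem_Ico] at hx1 hx2
    have : (0:ℝ) ≤ (p:ℝ)/(N:ℝ)^k := by positivity
    linarith [hx1.1]
  · obtain ⟨x, hx1, hx2⟩ := hne
    simp only [Set.mem_Ici, Set.mem_Ico] at hx1 hx2
    have hub : ((p:ℝ)+1)/(N:ℝ)^k ≤ 1 := by
      rw [div_le_one (by positivity)]
      have : ((p+1:ℕ):ℝ) ≤ ((N^k:ℕ):ℝ) := Nat.cast_le.mpr hp
      push_cast at this; linarith
    linarith [hx1.2]
  · rcases le_total k l with hkl | hlk
    · rw [Set.inter_eq_self_of_subset_right (inter_sub hN hp hq hkl hne)]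
      exact Or.inr (Or.inr ⟨l, q, hq, rfl⟩)
    · rw [Set.inter_comm] at hne ⊢
      rw [Set.inter_eq_self_of_subset_right (inter_sub hN hq hp hlk hne)]
      exact Or.inr (Or.inr ⟨k, p, hp, rfl⟩)

open MeasurableSpace in
lemma nadicC_gen {N : ℕ} (hN : 2 ≤ N) :
    (Real.measurableSpace : MeasurableSpace ℝ) = generateFrom (nadicC N) := by
  have hNR : (1:ℝ) < N := by exact_mod_cast hN
  apply le_antisymm
  · rw [show (Real.measurableSpace : MeasurableSpace ℝ) = borel ℝ from rfl,
      borel_eq_generateFrom_Iio ℝ]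
    apply generateFrom_le
    rintro s ⟨t, rfl⟩
    by_cases ht0 : t ≤ 0
    · exact measurableSet_generateFrom (Or.inl ⟨t, ht0, rfl⟩)
    by_cases ht1 : 1 ≤ t
    · have : Set.Iio t = (Set.Ici t)ᶜ := by simp
      rw [this]
      exact (measurableSet_generateFrom (Or.inr (Or.inl ⟨t, ht1, rfl⟩))).compl
    push_neg at ht0 ht1
    have key : Set.Iio t = Set.Iio 0 ∪ ⋃ pr : ℕ × ℕ,
        if pr.2 < N ^ pr.1 ∧ ((pr.2:ℝ)+1)/(N:ℝ)^pr.1 ≤ t then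
          Set.Ico ((pr.2:ℝ)/(N:ℝ)^pr.1) (((pr.2:ℝ)+1)/(N:ℝ)^pr.1) else ∅ := by
      apply Set.eq_of_subset_of_subset
      · intro x hx
        simp only [Set.mem_Iio] at hx
        rcases lt_or_ge x 0 with hx0 | hx0
        · exact Or.inl hx0
        right
        obtain ⟨n, hn⟩ := exists_pow_lt_of_lt_one (sub_pos.mpr hx)
          (by rw [inv_lt_one_iff₀]; right; exact hNR : (N:ℝ)⁻¹ < 1)
        set j := ⌊x * (N:ℝ)^n⌋₊ with hj
        have hNn : (0:ℝ) < (N:ℝ)^n := by positivity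
        have hj1 : (j:ℝ) ≤ x * (N:ℝ)^n := Nat.floor_le (by positivity)
        have hj2 : x * (N:ℝ)^n < (j:ℝ) + 1 := Nat.lt_floor_add_one _
        have hx1 : x < 1 := lt_trans hx ht1
        have hjlt : j < N ^ n := by
          have : (j:ℝ) < ((N^n : ℕ):ℝ) := by
            push_cast
            calc (j:ℝ) ≤ x * (N:ℝ)^n := hj1
              _ < 1 * (N:ℝ)^n := by nlinarith
              _ = (N:ℝ)^n := one_mul _
          exact_mod_cast this
        have hmem : x ∈ Set.Ico ((j:ℝ)/(N:ℝ)^n) (((j:ℝ)+1)/(N:ℝ)^n) := by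
          constructor
          · rw [div_le_iff₀ hNn]; linarith
          · rw [lt_div_iff₀ hNn]; linarith
        have hle : ((j:ℝ)+1)/(N:ℝ)^n ≤ t := by
          rw [div_le_iff₀ hNn]
          have hinv : ((N:ℝ)⁻¹)^n * (N:ℝ)^n = 1 := by
            rw [← mul_pow]; simp [ne_of_gt (lt_trans one_pos hNR)]
          nlinarith [hn]
        rw [Set.mem_iUnion]
        exact ⟨(n, j), by rw [if_pos ⟨hjlt, hle⟩]; exact hmem⟩
      · apply Set.union_subset
        · intro x hx; simp only [Set.mem_Iio] at *; linarith
        · apply Set.iUnion_subset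
          rintro ⟨n, j⟩ x hx
          simp only at hx
          split_ifs at hx with h
          · simp only [Set.mem_Ico] at hx
            simp only [Set.mem_Iio]
            linarith [hx.2, h.2]
          · exact absurd hx (Set.notMem_empty x)
    rw [key]
    apply MeasurableSet.union
    · exact measurableSet_generateFrom (Or.inl ⟨0, le_refl 0, rfl⟩)
    · apply MeasurableSet.iUnion
      rintro ⟨n, j⟩
      by_cases h : j < N ^ n ∧ ((j:ℝ)+1)/(N:ℝ)^n ≤ t
      · rw [if_pos h]
        exact measurableSet_generateFrom (Or.inr (Or.inr ⟨n, j, h.1, rfl⟩))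
      · rw [if_neg h]; exact @MeasurableSet.empty ℝ (generateFrom (nadicC N))
  · apply generateFrom_le
    rintro s (⟨a, _, rfl⟩ | ⟨a, _, rfl⟩ | ⟨k, p, _, rfl⟩)
    · exact measurableSet_Iio
    · exact measurableSet_Ici
    · exact measurableSet_Ico

/-! ### Operator lemmas -/

lemma adjoint_Sw {N : ℕ} (S : Fin N → H →L[ℂ] H) (f : H) (lam : Fin N → ℂ)
    (heig : ∀ j : Fin N, adjoint (S j) f = lam j • f) :
    ∀ {k : ℕ} (α : Fin k → Fin N), adjoint (Sw S α) f = (∏ i, lam (α i)) • f := by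
  intro k
  induction k with
  | zero =>
    intro α
    have h1 : Sw S α = 1 := by simp [Sw, List.ofFn_zero]
    have h2 : adjoint (1 : H →L[ℂ] H) = 1 := by
      rw [ContinuousLinearMap.one_def, ContinuousLinearMap.adjoint_id]
    simp [h1, h2]
  | succ m ih =>
    intro α
    have hsw : Sw S α = S (α 0) ∘L Sw S (fun i : Fin m => α i.succ) := by
      rw [Sw, List.ofFn_succ, List.prod_cons, ContinuousLinearMap.mul_def]
      rfl
    rw [hsw, ContinuousLinearMap.adjoint_comp]
    rw [ContinuousLinearMap.comp_apply, heig,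
      (adjoint (Sw S fun i : Fin m => α i.succ)).map_smul, ih, Fin.prod_univ_succ,
      smul_smul]

lemma sum_lam {N : ℕ} (S : Fin N → H →L[ℂ] H)
    (hS2 : ∑ j : Fin N, S j ∘L adjoint (S j) = 1)
    (f : H) (hf : ‖f‖ = 1) (lam : Fin N → ℂ)
    (heig : ∀ j : Fin N, adjoint (S j) f = lam j • f) :
    ∑ j : Fin N, ‖lam j‖ ^ 2 = 1 := by
  have h1 : (∑ j : Fin N, S j ∘L adjoint (S j)) f = f := by rw [hS2]; rfl
  have h2 : ∑ j : Fin N, lam j • S j f = f := by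
    calc ∑ j : Fin N, lam j • S j f = ∑ j : Fin N, (S j ∘L adjoint (S j)) f := by
          apply Finset.sum_congr rfl
          intro j _
          rw [ContinuousLinearMap.comp_apply, heig, (S j).map_smul]
      _ = (∑ j : Fin N, S j ∘L adjoint (S j)) f := by
          rw [ContinuousLinearMap.sum_apply]
      _ = f := h1
  have h3 : ⟪f, (f:H)⟫_ℂ = ∑ j : Fin N, lam j * ⟪f, S j f⟫_ℂ := by
    have := congrArg (fun z : H => ⟪f, z⟫_ℂ) h2
    simp only [inner_sum, inner_smul_right] at this
    exact this.symm
  have h4 : ∀ j : Fin N, ⟪f, S j f⟫_ℂ = (starRingEnd ℂ) (lam j) := by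
    intro j
    rw [← ContinuousLinearMap.adjoint_inner_left (S j) f f, heig, inner_smul_left,
      inner_self_eq_norm_sq_to_K, hf]
    norm_num
  have h5 : ⟪f, (f:H)⟫_ℂ = (1:ℂ) := by
    rw [inner_self_eq_norm_sq_to_K, hf]; norm_num
  rw [h5] at h3
  have h6 : (1:ℂ) = ∑ j : Fin N, (‖lam j‖:ℂ) ^ 2 := by
    rw [h3]
    apply Finset.sum_congr rfl
    intro j _
    rw [h4 j, RCLike.mul_conj]
    norm_cast
  exact_mod_cast h6.symm

/-! ### Preimage computations -/

lemma preimage_Ico_sigma {N : ℕ} (hN : 0 < N) (c u v : ℝ) :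
    (fun x : ℝ => (x + c) / N) ⁻¹' Set.Ico u v = Set.Ico ((N:ℝ) * u - c) ((N:ℝ) * v - c) := by
  have hNR : (0:ℝ) < N := by exact_mod_cast hN
  ext x
  simp only [Set.mem_preimage, Set.mem_Ico]
  rw [le_div_iff₀ hNR, div_lt_iff₀ hNR]
  constructor <;> rintro ⟨h1, h2⟩ <;> exact ⟨by linarith, by linarith⟩

lemma preimage_Iio_sigma {N : ℕ} (hN : 0 < N) (c a : ℝ) :
    (fun x : ℝ => (x + c) / N) ⁻¹' Set.Iio a = Set.Iio ((N:ℝ) * a - c) := by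
  have hNR : (0:ℝ) < N := by exact_mod_cast hN
  ext x
  simp only [Set.mem_preimage, Set.mem_Iio]
  rw [div_lt_iff₀ hNR]
  constructor <;> intro h <;> linarith

lemma preimage_Ici_sigma {N : ℕ} (hN : 0 < N) (c a : ℝ) :
    (fun x : ℝ => (x + c) / N) ⁻¹' Set.Ici a = Set.Ici ((N:ℝ) * a - c) := by
  have hNR : (0:ℝ) < N := by exact_mod_cast hN
  ext x
  simp only [Set.mem_preimage, Set.mem_Ici]
  rw [le_div_iff₀ hNR]
  constructor <;> intro h <;> linarith

/-- If `(S_j)` is a representation of `𝒪_N`, `‖f‖ = 1`, `S_j^* f = λ_j f` for all `j`,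
and `μ` is a spectral measure of `f` on `[0,1)`, then
`μ = ∑_j |λ_j|² · (μ ∘ σ_j⁻¹)` where `σ_j(x) = (x+j)/N`. -/
theorem stmt_1 {N : ℕ} (hN : 2 ≤ N) (S : Fin N → H →L[ℂ] H) (hS : CuntzRep S)
    (f : H) (hf : ‖f‖ = 1) (lam : Fin N → ℂ)
    (heig : ∀ j : Fin N, adjoint (S j) f = lam j • f)
    (μ : Measure ℝ) (hμ : IsSpectralMeasureR S f μ) :
    μ = ∑ j : Fin N,
      ENNReal.ofReal (‖lam j‖ ^ 2) • Measure.map (fun x : ℝ => (x + (j : ℝ)) / N) μ := by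
  obtain ⟨hS1, hS2⟩ := hS
  obtain ⟨hnull, hunivμ, hint⟩ := hμ
  have hN0 : 0 < N := by omega
  have hNR : (0:ℝ) < N := by exact_mod_cast hN0
  set c : Fin N → ENNReal := fun j => ENNReal.ofReal (‖lam j‖ ^ 2) with hc
  set σ : Fin N → ℝ → ℝ := fun j x => (x + (j : ℝ)) / N with hσdef
  have hσ : ∀ j : Fin N, Measurable (σ j) :=
    fun j => (measurable_id.add_const _).div_const _
  have hμuniv : μ Set.univ = 1 := by rw [hunivμ, hf]; norm_num
  have hIco01 : μ (Set.Ico (0:ℝ) 1) = 1 := by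
    have h := measure_add_measure_compl (μ := μ) (measurableSet_Ico (a := (0:ℝ)) (b := 1))
    rw [hnull, add_zero] at h
    rw [h, hμuniv]
  haveI : IsFiniteMeasure μ := ⟨by rw [hμuniv]; exact ENNReal.one_lt_top⟩
  -- μ of N-adic intervals
  have hIk : ∀ (k : ℕ) (α : Fin k → Fin N), μ (Ik N α) = ∏ i, c (α i) := by
    intro k α
    cases k with
    | zero =>
      have h0 : Ik N α = Set.Ico (0:ℝ) 1 := by
        rw [Ik, xk_zero]; norm_num
      rw [h0, hIco01]
      simp
    | succ m =>
      rw [hint (m+1) (by omega) α, adjoint_Sw S f lam heig α, norm_smul, hf, mul_one]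
      have hprod : ‖∏ i, lam (α i)‖ ^ 2 = ∏ i, ‖lam (α i)‖ ^ 2 := by
        rw [norm_prod, Finset.prod_pow]
      rw [hprod, ENNReal.ofReal_prod_of_nonneg (fun i _ => by positivity)]
  -- the coefficients sum to 1
  have hsum : ∑ j : Fin N, c j = 1 := by
    rw [hc]
    rw [← ENNReal.ofReal_sum_of_nonneg (fun j _ => by positivity),
      sum_lam S hS2 f hf lam heig, ENNReal.ofReal_one]
  -- measurability of Ik
  have hIkm : ∀ (k : ℕ) (α : Fin k → Fin N), MeasurableSet (Ik N α) := by
    intro k α; rw [Ik]; exact measurableSet_Ico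
  -- the RHS measure evaluated on N-adic intervals
  have hνIk : ∀ (k : ℕ) (α : Fin k → Fin N),
      (∑ j : Fin N, c j • Measure.map (σ j) μ) (Ik N α) = ∏ i, c (α i) := by
    intro k α
    rw [Measure.finset_sum_apply]
    cases k with
    | zero =>
      have h0 : Ik N α = Set.Ico (0:ℝ) 1 := by
        rw [Ik, xk_zero]; norm_num
      have hterm : ∀ j : Fin N, (c j • Measure.map (σ j) μ) (Ik N α) = c j := by
        intro j
        rw [Measure.smul_apply, Measure.map_apply (hσ j) (hIkm 0 α), h0,
          hσdef, preimage_Ico_sigma hN0]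
        have hjle : ((j:ℕ):ℝ) ≤ (N:ℝ) - 1 := by
          have h2 : (j : ℕ) + 1 ≤ N := j.isLt
          have := (Nat.cast_le (α := ℝ)).mpr h2; push_cast at this; linarith
        have hsub : Set.Ico (0:ℝ) 1 ⊆ Set.Ico ((N:ℝ) * 0 - (j:ℝ)) ((N:ℝ) * 1 - (j:ℝ)) := by
          intro x hx
          obtain ⟨hx1, hx2⟩ := hx
          have : (0:ℝ) ≤ (j:ℝ) := Nat.cast_nonneg _
          exact ⟨by linarith, by linarith⟩
        have h1 : μ (Set.Ico ((N:ℝ) * 0 - (j:ℝ)) ((N:ℝ) * 1 - (j:ℝ))) = 1 :=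
          le_antisymm (hμuniv ▸ measure_mono (Set.subset_univ _))
            (hIco01 ▸ measure_mono hsub)
        rw [h1, smul_eq_mul, mul_one]
      rw [Finset.sum_congr rfl (fun j _ => hterm j), hsum]
      simp
    | succ m =>
      have e1 : ∀ j : Fin N, σ j ⁻¹' (Ik N α) =
          Set.Ico (((α 0 : ℕ):ℝ) - (j:ℝ) + xk N (Fin.tail α))
            (((α 0 : ℕ):ℝ) - (j:ℝ) + xk N (Fin.tail α) + ((N:ℝ)^m)⁻¹) := by
        intro j
        rw [Ik, hσdef, preimage_Ico_sigma hN0]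
        have hxk := xk_succ hN0 α
        have hNne : (N:ℝ) ≠ 0 := ne_of_gt hNR
        have hNm : ((N:ℝ))^m ≠ 0 := by positivity
        have hL : (N:ℝ) * xk N α - ((j:ℕ):ℝ)
            = ((α 0 : ℕ):ℝ) - ((j:ℕ):ℝ) + xk N (Fin.tail α) := by
          rw [hxk]; field_simp; ring
        have hR : (N:ℝ) * (xk N α + ((N:ℝ)^(m+1))⁻¹) - ((j:ℕ):ℝ)
            = ((α 0 : ℕ):ℝ) - ((j:ℕ):ℝ) + xk N (Fin.tail α) + ((N:ℝ)^m)⁻¹ := by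
          rw [hxk, pow_succ]; field_simp; ring
        rw [hL, hR]
      have hzero : ∀ j : Fin N, j ≠ α 0 → (c j • Measure.map (σ j) μ) (Ik N α) = 0 := by
        intro j hj
        rw [Measure.smul_apply, Measure.map_apply (hσ j) (hIkm (m+1) α), e1 j]
        have hμ0 : μ (Set.Ico (((α 0 : ℕ):ℝ) - (j:ℝ) + xk N (Fin.tail α))
            (((α 0 : ℕ):ℝ) - (j:ℝ) + xk N (Fin.tail α) + ((N:ℝ)^m)⁻¹)) = 0 := by
          apply measure_mono_null _ hnull
          intro x hx
          obtain ⟨hx1, hx2⟩ := hx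
          simp only [Set.mem_compl_iff, Set.mem_Ico, not_and, not_lt]
          intro hx0
          have hxk0 := xk_nonneg N (Fin.tail α)
          have hxkb := xk_add_le hN0 (Fin.tail α)
          rcases Nat.lt_or_ge ((α 0 : ℕ)) ((j:ℕ)) with hlt | hge
          · exfalso
            have hd : ((α 0:ℕ):ℝ) - ((j:ℕ):ℝ) ≤ -1 := by
              have : ((α 0:ℕ):ℝ) + 1 ≤ ((j:ℕ):ℝ) := by exact_mod_cast hlt
              linarith
            linarith
          · have hgt : ((j:ℕ)) < (α 0 : ℕ) := by
              have hne' : ((j:ℕ)) ≠ ((α 0 : ℕ)) := fun h => hj (Fin.val_injective h)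
              omega
            have hd : (1:ℝ) ≤ ((α 0:ℕ):ℝ) - ((j:ℕ):ℝ) := by
              have : ((j:ℕ):ℝ) + 1 ≤ ((α 0:ℕ):ℝ) := by exact_mod_cast hgt
              linarith
            linarith
        rw [hμ0, smul_eq_mul, mul_zero]
      have hkey : (c (α 0) • Measure.map (σ (α 0)) μ) (Ik N α) = ∏ i, c (α i) := by
        rw [Measure.smul_apply, Measure.map_apply (hσ (α 0)) (hIkm (m+1) α), e1 (α 0)]
        have hset : Set.Ico (((α 0 : ℕ):ℝ) - ((α 0 : Fin N):ℝ) + xk N (Fin.tail α))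
            (((α 0 : ℕ):ℝ) - ((α 0 : Fin N):ℝ) + xk N (Fin.tail α) + ((N:ℝ)^m)⁻¹)
            = Ik N (Fin.tail α) := by
          rw [Ik]
          congr 1 <;> ring
        rw [hset, hIk m (Fin.tail α), smul_eq_mul, Fin.prod_univ_succ]
        rfl
      rw [Finset.sum_eq_single (α 0) (fun b _ hb => hzero b hb)
        (fun h => absurd (Finset.mem_univ _) h)]
      exact hkey
  -- apply the π-system uniqueness theorem
  apply MeasureTheory.ext_of_generate_finite (nadicC N) (nadicC_gen hN) (nadicC_pi hN0)
  · rintro s (⟨a, ha, rfl⟩ | ⟨a, ha, rfl⟩ | ⟨k, p, hp, rfl⟩)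
    · -- left rays
      have hμs : μ (Set.Iio a) = 0 := by
        apply measure_mono_null _ hnull
        intro x hx
        simp only [Set.mem_Iio] at hx
        simp only [Set.mem_compl_iff, Set.mem_Ico, not_and, not_lt]
        intro h0x; linarith
      rw [hμs, Measure.finset_sum_apply]
      symm
      apply Finset.sum_eq_zero
      intro j _
      rw [Measure.smul_apply, Measure.map_apply (hσ j) measurableSet_Iio,
        hσdef, preimage_Iio_sigma hN0]
      have hμ0 : μ (Set.Iio ((N:ℝ) * a - (j:ℝ))) = 0 := by
        apply measure_mono_null _ hnull
        intro x hx
        simp only [Set.mem_Iio] at hx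
        simp only [Set.mem_compl_iff, Set.mem_Ico, not_and, not_lt]
        intro h0x
        have h1 : (0:ℝ) ≤ (j:ℝ) := Nat.cast_nonneg _
        nlinarith
      rw [hμ0, smul_eq_mul, mul_zero]
    · -- right rays
      have hμs : μ (Set.Ici a) = 0 := by
        apply measure_mono_null _ hnull
        intro x hx
        simp only [Set.mem_Ici] at hx
        simp only [Set.mem_compl_iff, Set.mem_Ico, not_and, not_lt]
        intro h0x; linarith
      rw [hμs, Measure.finset_sum_apply]
      symm
      apply Finset.sum_eq_zero
      intro j _
      rw [Measure.smul_apply, Measure.map_apply (hσ j) measurableSet_Ici,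
        hσdef, preimage_Ici_sigma hN0]
      have hμ0 : μ (Set.Ici ((N:ℝ) * a - (j:ℝ))) = 0 := by
        apply measure_mono_null _ hnull
        intro x hx
        simp only [Set.mem_Ici] at hx
        simp only [Set.mem_compl_iff, Set.mem_Ico, not_and, not_lt]
        intro h0x
        have hjle : ((j:ℕ):ℝ) ≤ (N:ℝ) - 1 := by
          have h2 : (j : ℕ) + 1 ≤ N := j.isLt
          have := (Nat.cast_le (α := ℝ)).mpr h2; push_cast at this; linarith
        nlinarith
      rw [hμ0, smul_eq_mul, mul_zero]
    · -- N-adic intervals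
      obtain ⟨α, hα⟩ := exists_digits hN0 k p hp
      have hNk : ((N:ℝ))^k ≠ 0 := by positivity
      have hIkeq : Ik N α = Set.Ico ((p:ℝ)/(N:ℝ)^k) (((p:ℝ)+1)/(N:ℝ)^k) := by
        rw [Ik, hα]
        congr 1
        field_simp
      rw [← hIkeq, hIk k α, hνIk k α]
  · -- equality on univ
    rw [hμuniv, Measure.finset_sum_apply]
    symm
    have hterm : ∀ j : Fin N,
        (c j • Measure.map (σ j) μ) Set.univ = c j := by
      intro j
      rw [Measure.smul_apply, Measure.map_apply (hσ j) MeasurableSet.univ,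
        Set.preimage_univ, hμuniv, smul_eq_mul, mul_one]
    rw [Finset.sum_congr rfl (fun j _ => hterm j), hsum]
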